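/- Let p be a prime, e = p − 1, and E(X) = X^e + p, regarded as a polynomial in ℚ_p[X]. For all integers n and i with 1 ≤ n < p and i ≥ n, there exist elements a_0, …, a_{n−1} ∈ ℤ_p and b_n, …, b_i ∈ ℤ_p such that X^{ie}/i! = Σ_{k=0}^{n−1} p^{n−k} a_k E(X)^k + Σ_{k=n}^{i} b_k · E(X)^k / k! in ℚ_p[X]. -/

import Mathlib

open Polynomial

section Aux

variable (p : ℕ) [hp : Fact p.Prime]

omit hp in
private lemma dpe_sum_digits_pos {m : ℕ} (hm : m ≠ 0) : 1 ≤ (p.digits m).sum := by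
  have hne : p.digits m ≠ [] := Nat.digits_ne_nil_iff_ne_zero.mpr hm
  have hlast := Nat.getLast_digit_ne_zero p hm
  have hmem : (p.digits m).getLast hne ∈ p.digits m := List.getLast_mem hne
  have := List.single_le_sum (fun x _ => Nat.zero_le x) _ hmem
  omega

private lemma dpe_val_factorial_le {m : ℕ} (hm : m ≠ 0) {a : ℕ}
    (h : m - 1 ≤ (p - 1) * a) : padicValNat p m.factorial ≤ a := by
  have hleg := sub_one_mul_padicValNat_factorial (p := p) m
  have hds := dpe_sum_digits_pos p hm
  have h2 : (p - 1) * padicValNat p m.factorial ≤ (p - 1) * a := by omega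
  exact Nat.le_of_mul_le_mul_left h2 (by have := hp.out.two_le; omega)

private lemma dpe_val_factorial_zero {m : ℕ} (hm : m < p) :
    padicValNat p m.factorial = 0 := by
  apply padicValNat.eq_zero_of_not_dvd
  rw [hp.out.dvd_factorial]
  omega

private lemma dpe_norm_aux (s a m : ℕ) (hm : m ≠ 0) (h : padicValNat p m ≤ a) :
    ‖((-1) ^ s * (p : ℚ_[p]) ^ a * ((m : ℚ_[p]))⁻¹)‖ ≤ 1 := by
  have hm' : (m : ℚ_[p]) ≠ 0 := Nat.cast_ne_zero.mpr hm
  have hp1 : (1 : ℝ) < p := by exact_mod_cast hp.out.one_lt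
  have hnm : ‖(m : ℚ_[p])‖ = (p : ℝ) ^ (-(padicValNat p m : ℤ)) := by
    rw [Padic.norm_eq_zpow_neg_valuation hm', Padic.valuation_natCast]
  rw [norm_mul, norm_mul, norm_pow, norm_neg, norm_one, one_pow, one_mul,
    Padic.norm_p_pow, norm_inv, hnm, ← zpow_neg, ← zpow_add₀ (by positivity : (p:ℝ) ≠ 0)]
  rw [neg_neg]
  apply zpow_le_one_of_nonpos₀ (le_of_lt hp1)
  omega

end Aux

/-- Expansion of the divided power `X^{ie}/i!` in powers of the Eisenstein polynomial
`E(X) = X^e + p` (with `e = p - 1`): for `1 ≤ n < p` and `i ≥ n`,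
`X^{ie}/i! = ∑_{k=0}^{n-1} p^{n-k} a_k E(X)^k + ∑_{k=n}^{i} b_k E(X)^k / k!`
with `a_k, b_k ∈ ℤ_p`. -/
theorem divided_power_expansion
    (p : ℕ) [hp : Fact p.Prime] (n i : ℕ) (hn1 : 1 ≤ n) (hnp : n < p) (hni : n ≤ i) :
    ∃ a b : ℕ → ℤ_[p],
      C ((Nat.factorial i : ℚ_[p])⁻¹) * X ^ (i * (p - 1)) =
        (∑ k ∈ Finset.range n,
          C ((p : ℚ_[p]) ^ (n - k) * ((a k : ℚ_[p]))) * (X ^ (p - 1) + C (p : ℚ_[p])) ^ k) +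
        (∑ k ∈ Finset.Icc n i,
          C ((b k : ℚ_[p]) * (Nat.factorial k : ℚ_[p])⁻¹) * (X ^ (p - 1) + C (p : ℚ_[p])) ^ k) := by
  -- coefficient function
  set c : ℕ → ℚ_[p] := fun k =>
    (-1) ^ (i - k) * (p : ℚ_[p]) ^ (i - k) *
      (((k.factorial * (i - k).factorial : ℕ) : ℚ_[p]))⁻¹ with hc
  -- valuation bound for `k < n`
  have hvalA : ∀ k, k < n → padicValNat p (k.factorial * (i - k).factorial) ≤ i - n := by
    intro k hk
    have hkf : padicValNat p k.factorial = 0 := dpe_val_factorial_zero p (by omega)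
    have hik : i - k ≠ 0 := by omega
    have hikf : padicValNat p ((i - k).factorial) ≤ i - n := by
      rcases lt_or_ge (i - k) p with h | h
      · rw [dpe_val_factorial_zero p h]; omega
      · -- here i ≥ p + k > n, so i ≥ n + 1
        apply dpe_val_factorial_le p hik
        have hin : n + 1 ≤ i := by have := hp.out.two_le; omega
        obtain ⟨t, rfl⟩ : ∃ t, p = n + 1 + t := ⟨p - n - 1, by omega⟩
        obtain ⟨s, rfl⟩ : ∃ s, i = n + 1 + s := ⟨i - n - 1, by omega⟩
        have h1 : n + 1 + s - k - 1 ≤ n + s := by omega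
        have h2 : (n + 1 + t - 1) * (n + 1 + s - n) = (n + t) * (s + 1) := by
          congr 1 <;> omega
        have h3 : n + s ≤ (n + t) * (s + 1) := by nlinarith
        omega
    rw [padicValNat.mul (Nat.factorial_ne_zero k) (Nat.factorial_ne_zero (i - k)), hkf]
    omega
  -- the integral elements
  refine ⟨fun k => if hk : k < n then
      ⟨(-1) ^ (i - k) * (p : ℚ_[p]) ^ (i - n) *
        (((k.factorial * (i - k).factorial : ℕ) : ℚ_[p]))⁻¹,
        dpe_norm_aux p _ _ _ (by positivity) (hvalA k hk)⟩ else 0,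
    fun k =>
      ⟨(-1) ^ (i - k) * (p : ℚ_[p]) ^ (i - k) * ((((i - k).factorial : ℕ) : ℚ_[p]))⁻¹,
        dpe_norm_aux p _ _ _ (Nat.factorial_ne_zero _)
          (by
            rcases le_or_gt (i - k) 0 with h | h
            · interval_cases h' : (i - k) <;> simp
            · exact dpe_val_factorial_le p (by omega)
                (by have h2 := Nat.mul_le_mul_right (i - k)
                      (by have := hp.out.two_le; omega : 1 ≤ p - 1)
                    omega))⟩, ?_⟩
  -- key expansion
  have hfne : (i.factorial : ℚ_[p]) ≠ 0 := Nat.cast_ne_zero.mpr i.factorial_ne_zero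
  have key : C ((Nat.factorial i : ℚ_[p]))⁻¹ * X ^ (i * (p - 1)) =
      ∑ k ∈ Finset.range (i + 1), C (c k) * (X ^ (p - 1) + C (p : ℚ_[p])) ^ k := by
    have hXpow : (X : ℚ_[p][X]) ^ (i * (p - 1)) =
        ((X ^ (p - 1) + C (p : ℚ_[p])) + (-C (p : ℚ_[p]))) ^ i := by
      rw [mul_comm, pow_mul]; ring_nf
    rw [hXpow, add_pow, Finset.mul_sum]
    refine Finset.sum_congr rfl fun k hk => ?_
    rw [Finset.mem_range] at hk
    have hki : k ≤ i := by omega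
    have hfac : ((i.choose k : ℚ_[p])) * ((k.factorial * (i - k).factorial : ℕ) : ℚ_[p])
        = (i.factorial : ℚ_[p]) := by
      exact_mod_cast congrArg (Nat.cast (R := ℚ_[p]))
        (by rw [← Nat.choose_mul_factorial_mul_factorial hki]; ring)
    have hmne : ((k.factorial * (i - k).factorial : ℕ) : ℚ_[p]) ≠ 0 :=
      Nat.cast_ne_zero.mpr (by positivity)
    have h1 : (((k.factorial * (i - k).factorial : ℕ)) : ℚ_[p]) *
        ((i.choose k : ℚ_[p]) * ((i.factorial : ℚ_[p]))⁻¹) = 1 := by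
      rw [← mul_assoc, mul_comm (((k.factorial * (i - k).factorial : ℕ)) : ℚ_[p]), hfac,
        mul_inv_cancel₀ hfne]
    have hinv : (((k.factorial * (i - k).factorial : ℕ)) : ℚ_[p])⁻¹
        = (i.choose k : ℚ_[p]) * ((i.factorial : ℚ_[p]))⁻¹ :=
      inv_eq_of_mul_eq_one_right h1
    have hsc : (i.factorial : ℚ_[p])⁻¹ * ((-(p:ℚ_[p])) ^ (i - k) * (i.choose k : ℚ_[p]))
        = c k := by
      simp only [hc]
      rw [hinv, neg_pow]
      ring
    calc C ((i.factorial : ℚ_[p]))⁻¹ *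
          ((X ^ (p - 1) + C (p:ℚ_[p])) ^ k * (-C (p:ℚ_[p])) ^ (i - k) * (i.choose k : ℚ_[p][X]))
        = C ((i.factorial : ℚ_[p])⁻¹ * ((-(p:ℚ_[p])) ^ (i - k) * (i.choose k : ℚ_[p]))) *
            (X ^ (p - 1) + C (p:ℚ_[p])) ^ k := by
          rw [C_mul, C_mul, ← C_neg, C_pow, ← C_eq_natCast]; ring
      _ = C (c k) * (X ^ (p - 1) + C (p:ℚ_[p])) ^ k := by rw [hsc]
  rw [key, ← Finset.sum_range_add_sum_Ico _ (by omega : n ≤ i + 1), Finset.Ico_add_one_right_eq_Icc]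
  congr 1
  · refine Finset.sum_congr rfl fun k hk => ?_
    rw [Finset.mem_range] at hk
    congr 1
    simp only [dif_pos hk, hk, ↓reduceDIte]
    show C (c k) = C ((p:ℚ_[p]) ^ (n - k) * ((-1) ^ (i - k) * (p : ℚ_[p]) ^ (i - n) *
        (((k.factorial * (i - k).factorial : ℕ) : ℚ_[p]))⁻¹))
    congr 1
    simp only [hc]
    have hpow : (p:ℚ_[p]) ^ (n - k) * (p:ℚ_[p]) ^ (i - n) = (p:ℚ_[p]) ^ (i - k) := by
      rw [← pow_add]; congr 1; omega
    calc (-1) ^ (i - k) * (p : ℚ_[p]) ^ (i - k) *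
          (((k.factorial * (i - k).factorial : ℕ) : ℚ_[p]))⁻¹
        = (-1) ^ (i - k) * ((p:ℚ_[p]) ^ (n - k) * (p:ℚ_[p]) ^ (i - n)) *
          (((k.factorial * (i - k).factorial : ℕ) : ℚ_[p]))⁻¹ := by rw [hpow]
      _ = _ := by ring
  · refine Finset.sum_congr rfl fun k hk => ?_
    rw [Finset.mem_Icc] at hk
    congr 1
    show C (c k) = C (((-1) ^ (i - k) * (p : ℚ_[p]) ^ (i - k) *
        ((((i - k).factorial : ℕ) : ℚ_[p]))⁻¹) * (k.factorial : ℚ_[p])⁻¹)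
    congr 1
    simp only [hc]
    push_cast
    rw [mul_inv]
    ring
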